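/- Let G be a connected claw-free cubic graph that has a good decomposition with spanning tree T, and let C be a cycle of G that uses no edge of T. If C is not a triangle, then C has an even number of vertices. -/

import Mathlib

open SimpleGraph

variable {V : Type*}

/-- A graph is claw-free if it has no induced subgraph isomorphic to `K_{1,3}`:
there are no four vertices `v, a, b, c` with `v` adjacent to the pairwise distinct,
pairwise non-adjacent vertices `a, b, c`. -/
def IsClawFree (G : SimpleGraph V) : Prop :=
  ¬ ∃ v a b c : V, G.Adj v a ∧ G.Adj v b ∧ G.Adj v c ∧
    a ≠ b ∧ a ≠ c ∧ b ≠ c ∧ ¬ G.Adj a b ∧ ¬ G.Adj a c ∧ ¬ G.Adj b c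

/-- A graph is cubic if every vertex has degree three. -/
def IsCubic (G : SimpleGraph V) : Prop :=
  ∀ v : V, (G.neighborSet v).ncard = 3

/-- A graph (viewed as an edge set) is a matching if every vertex has at most one neighbour. -/
def IsMatchingGraph (M : SimpleGraph V) : Prop :=
  ∀ ⦃v w w' : V⦄, M.Adj v w → M.Adj v w' → w = w'

/-- A (nonempty) 2-regular subgraph: it has at least one edge, and every vertex incident
with an edge has exactly two neighbours. -/
def IsTwoRegularGraph (O : SimpleGraph V) : Prop :=
  O.edgeSet.Nonempty ∧ ∀ v ∈ O.support, (O.neighborSet v).ncard = 2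

/-- A good decomposition of `G`: the edge set of `G` is partitioned into the edge set of a
spanning tree `T`, a matching `M` (possibly empty), and the edge set of a 2-regular
subgraph `O`. -/
def IsGoodDecomposition (G T M O : SimpleGraph V) : Prop :=
  T ≤ G ∧ M ≤ G ∧ O ≤ G ∧
  T.IsTree ∧ IsMatchingGraph M ∧ IsTwoRegularGraph O ∧
  T.edgeSet ∪ M.edgeSet ∪ O.edgeSet = G.edgeSet ∧
  Disjoint T.edgeSet M.edgeSet ∧ Disjoint T.edgeSet O.edgeSet ∧
  Disjoint M.edgeSet O.edgeSet


private lemma walk_edge_mem {G : SimpleGraph V} {u w : V} (p : G.Walk u w) :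
    ∀ i, i < p.length → s(p.getVert i, p.getVert (i+1)) ∈ p.edges := by
  induction p with
  | nil => intro i hi; simp at hi
  | @cons a b c h q ih =>
    intro i hi
    cases i with
    | zero =>
      rw [Walk.getVert_zero, Walk.getVert_cons_succ, Walk.getVert_zero, Walk.edges_cons]
      exact List.mem_cons_self
    | succ n =>
      rw [Walk.getVert_cons_succ, Walk.getVert_cons_succ, Walk.edges_cons]
      exact List.mem_cons_of_mem _ (ih n (by simpa [Nat.succ_lt_succ_iff] using hi))

private lemma walk_support_getElem {G : SimpleGraph V} :
    ∀ {u w : V} (p : G.Walk u w) (i : ℕ) (h : i < p.support.length),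
      p.support[i] = p.getVert i := by
  intro u w p
  induction p with
  | nil => intro i h; simp [Walk.support_nil] at h; subst h; simp [Walk.support_nil]
  | @cons a b c h q ih =>
    intro i hilt
    cases i with
    | zero => simp [Walk.support_cons]
    | succ n =>
      simp only [Walk.support_cons, List.getElem_cons_succ, Walk.getVert_cons_succ]
      exact ih n (by simpa [Walk.support_cons] using hilt)

private lemma cycle_getVert_inj {G : SimpleGraph V} {u : V} {p : G.Walk u u} (hp : p.IsCycle)
    {i j : ℕ} (hi1 : 1 ≤ i) (hi : i ≤ p.length) (hj1 : 1 ≤ j) (hj : j ≤ p.length)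
    (h : p.getVert i = p.getVert j) : i = j := by
  have hlen : p.support.length = p.length + 1 := p.length_support
  have htl : p.support.tail.length = p.length := by
    rw [p.support_eq_cons] at hlen
    simpa using hlen
  have hti : ∀ k (h1 : 1 ≤ k) (h2 : k ≤ p.length),
      p.support.tail[k - 1]'(by omega) = p.getVert k := by
    intro k h1 h2
    have h3 : p.support[k]'(by omega) = p.getVert k := walk_support_getElem p k (by omega)
    rw [List.getElem_tail, ← h3]
    congr 1
    omega
  have e1 := hti i hi1 hi
  have e2 := hti j hj1 hj
  rw [← e1, ← e2] at h
  have := (hp.support_nodup.getElem_inj_iff).mp h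
  omega

private lemma reach_closed {G : SimpleGraph V} (S : Set V)
    (hS : ∀ a ∈ S, ∀ b, G.Adj a b → b ∈ S) :
    ∀ {x y : V} (_ : G.Walk x y), x ∈ S → y ∈ S := by
  intro x y w
  induction w with
  | nil => exact id
  | cons h q ih => intro hx; exact ih (hS _ hx _ h)

theorem cycle_avoiding_tree_even' [Fintype V] (G T M O : SimpleGraph V)
    (hclaw : ¬ ∃ v a b c : V, G.Adj v a ∧ G.Adj v b ∧ G.Adj v c ∧
      a ≠ b ∧ a ≠ c ∧ b ≠ c ∧ ¬ G.Adj a b ∧ ¬ G.Adj a c ∧ ¬ G.Adj b c)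
    (hcubic : ∀ v : V, (G.neighborSet v).ncard = 3)
    (hTG : T ≤ G) (hMG : M ≤ G) (hOG : O ≤ G)
    (hTree : T.IsTree) (hMatch : ∀ ⦃v w w' : V⦄, M.Adj v w → M.Adj v w' → w = w')
    (hOreg : O.edgeSet.Nonempty ∧ ∀ v ∈ O.support, (O.neighborSet v).ncard = 2)
    (hpart : T.edgeSet ∪ M.edgeSet ∪ O.edgeSet = G.edgeSet)
    (hdTM : Disjoint T.edgeSet M.edgeSet) (hdTO : Disjoint T.edgeSet O.edgeSet)
    (hdMO : Disjoint M.edgeSet O.edgeSet)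
    {v : V} (c : G.Walk v v) (hc : c.IsCycle)
    (hT : ∀ e ∈ c.edges, e ∉ T.edgeSet)
    (htri : c.length ≠ 3) :
    Even c.length := by
  classical
  set ℓ := c.length with hL
  have hl3 : 3 ≤ ℓ := hc.three_le_length
  have hl4 : 4 ≤ ℓ := by omega
  -- the cyclic vertex function
  set f : ℕ → V := fun i => c.getVert (i % ℓ) with hf
  have hfper : ∀ i, f (i + ℓ) = f i := by
    intro i; simp only [hf, Nat.add_mod_right]
  have hsucc : ∀ i : ℕ, (i + 1) % ℓ = if i % ℓ + 1 = ℓ then 0 else i % ℓ + 1 := by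
    intro i
    have hr : i % ℓ < ℓ := Nat.mod_lt _ (by omega)
    rw [Nat.add_mod, Nat.mod_eq_of_lt (show (1:ℕ) < ℓ by omega)]
    by_cases h : i % ℓ + 1 = ℓ
    · rw [if_pos h, h, Nat.mod_self]
    · rw [if_neg h, Nat.mod_eq_of_lt (by omega)]
  have hgv0 : c.getVert 0 = c.getVert ℓ := by
    rw [Walk.getVert_zero, hL, Walk.getVert_length]
  have hfadj : ∀ i, G.Adj (f i) (f (i + 1)) := by
    intro i
    have hr : i % ℓ < ℓ := Nat.mod_lt _ (by omega)
    show G.Adj (c.getVert (i % ℓ)) (c.getVert ((i + 1) % ℓ))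
    rw [hsucc i]
    split_ifs with h
    · rw [show c.getVert 0 = c.getVert (i % ℓ + 1) by rw [hgv0, h]]
      exact c.adj_getVert_succ (by omega)
    · exact c.adj_getVert_succ (by omega)
  have hfedge : ∀ i, s(f i, f (i + 1)) ∈ c.edges := by
    intro i
    have hr : i % ℓ < ℓ := Nat.mod_lt _ (by omega)
    show s(c.getVert (i % ℓ), c.getVert ((i + 1) % ℓ)) ∈ c.edges
    rw [hsucc i]
    split_ifs with h
    · rw [show c.getVert 0 = c.getVert (i % ℓ + 1) by rw [hgv0, h]]
      exact walk_edge_mem c _ (by omega)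
    · exact walk_edge_mem c _ (by omega)
  have hfinj : ∀ i j, f i = f j → i % ℓ = j % ℓ := by
    intro i j h
    have hi : i % ℓ < ℓ := Nat.mod_lt _ (by omega)
    have hj : j % ℓ < ℓ := Nat.mod_lt _ (by omega)
    have ea : ∀ k, c.getVert k = c.getVert (if k = 0 then ℓ else k) := by
      intro k
      split_ifs with h0
      · rw [h0, hgv0]
      · rfl
    have h' : c.getVert (if i % ℓ = 0 then ℓ else i % ℓ)
        = c.getVert (if j % ℓ = 0 then ℓ else j % ℓ) := by
      rw [← ea, ← ea]; exact h
    have := cycle_getVert_inj hc (i := if i % ℓ = 0 then ℓ else i % ℓ)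
      (j := if j % ℓ = 0 then ℓ else j % ℓ)
      (by split_ifs <;> omega) (by split_ifs <;> omega)
      (by split_ifs <;> omega) (by split_ifs <;> omega) h'
    split_ifs at this <;> omega
  have hfne : ∀ i k, 0 < k → k < ℓ → f i ≠ f (i + k) := by
    intro i k h1 h2 he
    have hmod := hfinj _ _ he
    have hdvd : ℓ ∣ (i + k) - i := (Nat.modEq_iff_dvd' (Nat.le_add_right i k)).mp hmod
    rw [Nat.add_sub_cancel_left] at hdvd
    exact absurd (Nat.le_of_dvd h1 hdvd) (by omega)
  -- decomposition helpers
  have hadj_part : ∀ {x y : V}, G.Adj x y → T.Adj x y ∨ M.Adj x y ∨ O.Adj x y := by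
    intro x y h
    have hmem : s(x, y) ∈ G.edgeSet := G.mem_edgeSet.mpr h
    rw [← hpart] at hmem
    rcases hmem with (h' | h') | h'
    · exact Or.inl h'
    · exact Or.inr (Or.inl h')
    · exact Or.inr (Or.inr h')
  have hTO : ∀ {x y : V}, T.Adj x y → O.Adj x y → False := fun h1 h2 =>
    Set.disjoint_left.mp hdTO (T.mem_edgeSet.mpr h1) (O.mem_edgeSet.mpr h2)
  have hTM : ∀ {x y : V}, T.Adj x y → M.Adj x y → False := fun h1 h2 =>
    Set.disjoint_left.mp hdTM (T.mem_edgeSet.mpr h1) (M.mem_edgeSet.mpr h2)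
  have hMO : ∀ {x y : V}, M.Adj x y → O.Adj x y → False := fun h1 h2 =>
    Set.disjoint_left.mp hdMO (M.mem_edgeSet.mpr h1) (O.mem_edgeSet.mpr h2)
  -- T-neighbour existence
  have hTex : ∀ x : V, ∃ y, T.Adj x y := by
    intro x
    have hne01 : f 0 ≠ f (0 + 1) := hfne 0 1 one_pos (by omega)
    have hz : ∃ z : V, z ≠ x := by
      by_cases h : x = f 0
      · exact ⟨f (0 + 1), by rw [h]; exact hne01.symm⟩
      · exact ⟨f 0, fun he => h he.symm⟩
    obtain ⟨z, hzx⟩ := hz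
    obtain ⟨w⟩ := hTree.isConnected.preconnected x z
    cases w with
    | nil => exact absurd rfl hzx
    | cons h p => exact ⟨_, h⟩
  choose tN htN using hTex
  set t : ℕ → V := fun i => tN (f i) with htdef
  have htadj : ∀ i, T.Adj (f i) (t i) := fun i => htN (f i)
  have htper : ∀ i, t (i + ℓ) = t i := by
    intro i; simp only [htdef]; rw [hfper]
  -- no O-support vertex touches M
  have noM : ∀ {x y z : V}, O.Adj x y → M.Adj x z → False := by
    intro x y z ho hm
    obtain ⟨a, b, hab, hOx⟩ := Set.ncard_eq_two.mp (hOreg.2 x ⟨y, ho⟩)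
    have haO : O.Adj x a := by
      have h' : a ∈ O.neighborSet x := by rw [hOx]; exact Set.mem_insert _ _
      exact h'
    have hbO : O.Adj x b := by
      have h' : b ∈ O.neighborSet x := by rw [hOx]; exact Set.mem_insert_of_mem _ rfl
      exact h'
    have hza : z ≠ a := fun h => hMO hm (h ▸ haO)
    have hzb : z ≠ b := fun h => hMO hm (h ▸ hbO)
    have hwa : tN x ≠ a := fun h => hTO (htN x) (h ▸ haO)
    have hwb : tN x ≠ b := fun h => hTO (htN x) (h ▸ hbO)
    have hwz : tN x ≠ z := fun h => hTM (htN x) (h ▸ hm)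
    have hsub : ({tN x, z, a, b} : Set V) ⊆ G.neighborSet x := by
      intro u hu
      rcases hu with h | h | h | h
      · exact h ▸ hTG (htN x)
      · exact h ▸ hMG hm
      · exact h ▸ hOG haO
      · rw [Set.mem_singleton_iff] at h
        exact h ▸ hOG hbO
    have h4 : ({tN x, z, a, b} : Set V).ncard = 4 := by
      rw [Set.ncard_insert_of_notMem (by simp [hwz, hwa, hwb]) (Set.toFinite _),
        Set.ncard_insert_of_notMem (by simp [hza, hzb]) (Set.toFinite _),
        Set.ncard_pair hab]
    have hle := Set.ncard_le_ncard hsub (Set.toFinite _)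
    rw [hcubic x, h4] at hle
    omega
  -- all cycle edges lie in O
  have hO : ∀ i, O.Adj (f i) (f (i + 1)) := by
    intro i
    have hT1 : ¬ T.Adj (f i) (f (i + 1)) := fun h =>
      hT _ (hfedge i) (T.mem_edgeSet.mpr h)
    rcases hadj_part (hfadj i) with h | h | h
    · exact absurd h hT1
    · exfalso
      rcases hadj_part (hfadj (i + 1)) with h2 | h2 | h2
      · exact hT _ (hfedge (i + 1)) (T.mem_edgeSet.mpr h2)
      · exact hfne i 2 (by omega) (by omega) (hMatch h.symm h2)
      · exact noM h2 h.symm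
    · exact h
  -- neighborhood of each cycle vertex
  have hOpred : ∀ i, O.Adj (f i) (f (i + (ℓ - 1))) := by
    intro i
    have h' := hO (i + (ℓ - 1))
    rw [show i + (ℓ - 1) + 1 = i + ℓ by omega, hfper i] at h'
    exact h'.symm
  have hNG : ∀ i, G.neighborSet (f i) = {f (i + (ℓ - 1)), f (i + 1), t i} := by
    intro i
    have hd1 : f (i + (ℓ - 1)) ≠ f (i + 1) := by
      have h' := hfne (i + 1) (ℓ - 2) (by omega) (by omega)
      rw [show i + 1 + (ℓ - 2) = i + (ℓ - 1) by omega] at h'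
      exact h'.symm
    have hd2 : t i ≠ f (i + (ℓ - 1)) := fun h => hTO (htadj i) (h ▸ hOpred i)
    have hd3 : t i ≠ f (i + 1) := fun h => hTO (htadj i) (h ▸ hO i)
    have hsub : ({f (i + (ℓ - 1)), f (i + 1), t i} : Set V) ⊆ G.neighborSet (f i) := by
      intro u hu
      rcases hu with h | h | h
      · exact h ▸ hOG (hOpred i)
      · exact h ▸ hOG (hO i)
      · rw [Set.mem_singleton_iff] at h
        exact h ▸ hTG (htadj i)
    have h3 : ({f (i + (ℓ - 1)), f (i + 1), t i} : Set V).ncard = 3 := by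
      rw [Set.ncard_insert_of_notMem (by simp [hd1, Ne.symm hd2]) (Set.toFinite _),
        Set.ncard_pair (Ne.symm hd3)]
    have hle : (G.neighborSet (f i)).ncard
        ≤ ({f (i + (ℓ - 1)), f (i + 1), t i} : Set V).ncard := by
      rw [hcubic (f i), h3]
    exact (Set.eq_of_subset_of_ncard_le hsub hle (Set.toFinite _)).symm
  -- uniqueness of the tree neighbour
  have htu : ∀ i y, T.Adj (f i) y → y = t i := by
    intro i y h
    have hy : y ∈ G.neighborSet (f i) := hTG h
    rw [hNG i] at hy
    rcases hy with h' | h' | h'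
    · exact absurd (h' ▸ hOpred i) (fun ho => hTO h ho)
    · exact absurd (h' ▸ hO i) (fun ho => hTO h ho)
    · exact h'
  -- the tree neighbours avoid the cycle
  have hTnotC : ∀ i j, t i ≠ f j := by
    intro i j he
    have hTij : T.Adj (f i) (f j) := he ▸ htadj i
    have hji : f i = t j := htu j (f i) hTij.symm
    have hclosed : ∀ a ∈ ({f i, f j} : Set V), ∀ b, T.Adj a b → b ∈ ({f i, f j} : Set V) := by
      intro a ha b hb
      rcases ha with h' | h'
      · subst h'
        right
        rw [htu i b hb, ← he]
        rfl
      · rw [Set.mem_singleton_iff] at h'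
        subst h'
        left
        rw [htu j b hb, ← hji]
    have hz : ∃ z : V, z ∉ ({f i, f j} : Set V) := by
      by_cases h1 : f (i + 1) = f j
      · refine ⟨f (i + 2), ?_⟩
        intro hmem
        rcases hmem with h' | h'
        · exact hfne i 2 (by omega) (by omega) h'.symm
        · rw [Set.mem_singleton_iff] at h'
          rw [← h1] at h'
          exact hfne (i + 1) 1 (by omega) (by omega) h'.symm
      · refine ⟨f (i + 1), ?_⟩
        intro hmem
        rcases hmem with h' | h'
        · exact hfne i 1 (by omega) (by omega) h'.symm
        · rw [Set.mem_singleton_iff] at h'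
          exact h1 h'
    obtain ⟨z, hzS⟩ := hz
    obtain ⟨w⟩ := hTree.isConnected.preconnected (f i) z
    exact hzS (reach_closed _ hclosed w (Set.mem_insert _ _))
  -- no three consecutive equal tree neighbours
  have hfiber : ∀ i, ¬ (t i = t (i + 1) ∧ t (i + 1) = t (i + 2)) := by
    rintro i ⟨h1, h2⟩
    have hT0 : T.Adj (f i) (t i) := htadj i
    have hT1 : T.Adj (f (i + 1)) (t i) := by
      have := htadj (i + 1); rwa [← h1] at this
    have hT2 : T.Adj (f (i + 2)) (t i) := by
      have := htadj (i + 2); rwa [← h2, ← h1] at this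
    have hd01 : f i ≠ f (i + 1) := hfne i 1 (by omega) (by omega)
    have hd02 : f i ≠ f (i + 2) := hfne i 2 (by omega) (by omega)
    have hd12 : f (i + 1) ≠ f (i + 2) := hfne (i + 1) 1 (by omega) (by omega)
    have hsub : ({f i, f (i + 1), f (i + 2)} : Set V) ⊆ G.neighborSet (t i) := by
      intro u hu
      rcases hu with h' | h' | h'
      · exact h' ▸ hTG hT0.symm
      · exact h' ▸ hTG hT1.symm
      · rw [Set.mem_singleton_iff] at h'
        exact h' ▸ hTG hT2.symm
    have h3 : ({f i, f (i + 1), f (i + 2)} : Set V).ncard = 3 := by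
      rw [Set.ncard_insert_of_notMem (by simp [hd01, hd02]) (Set.toFinite _),
        Set.ncard_pair hd12]
    have hNt : G.neighborSet (t i) = {f i, f (i + 1), f (i + 2)} := by
      have hle : (G.neighborSet (t i)).ncard
          ≤ ({f i, f (i + 1), f (i + 2)} : Set V).ncard := by
        rw [hcubic (t i), h3]
      exact (Set.eq_of_subset_of_ncard_le hsub hle (Set.toFinite _)).symm
    set S : Set V := insert (t i) {f i, f (i + 1), f (i + 2)} with hS
    have hclosed : ∀ a ∈ S, ∀ b, T.Adj a b → b ∈ S := by
      intro a ha b hb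
      rcases ha with h' | h' | h' | h'
      · rw [h'] at hb
        have hmem2 : b ∈ G.neighborSet (t i) := hTG hb
        rw [hNt] at hmem2
        exact Set.mem_insert_of_mem _ hmem2
      · subst h'
        rw [htu i b hb]
        exact Set.mem_insert _ _
      · subst h'
        rw [htu (i + 1) b hb, ← h1]
        exact Set.mem_insert _ _
      · rw [Set.mem_singleton_iff] at h'
        subst h'
        rw [htu (i + 2) b hb, ← h2, ← h1]
        exact Set.mem_insert _ _
    have hz : f (i + 3) ∉ S := by
      intro hmem
      rcases hmem with h' | h' | h' | h'
      · exact hTnotC i (i + 3) h'.symm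
      · exact hfne i 3 (by omega) (by omega) h'.symm
      · have := hfne (i + 1) 2 (by omega) (by omega)
        exact this h'.symm
      · rw [Set.mem_singleton_iff] at h'
        exact hfne (i + 2) 1 (by omega) (by omega) h'.symm
    obtain ⟨w⟩ := hTree.isConnected.preconnected (f i) (f (i + 3))
    exact hz (reach_closed _ hclosed w (by exact Set.mem_insert_of_mem _ (Set.mem_insert _ _)))
  -- the claw-free step
  have hstep : ∀ i, t (i + 1) = t i ∨ t (i + 1) = t (i + 2) := by
    intro i
    have hnab : ¬ G.Adj (f i) (f (i + 2)) := by
      intro h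
      have hmem : f (i + 2) ∈ G.neighborSet (f i) := h
      rw [hNG i] at hmem
      rcases hmem with h' | h' | h'
      · have h'' := hfne (i + 2) (ℓ - 3) (by omega) (by omega)
        rw [show i + 2 + (ℓ - 3) = i + (ℓ - 1) by omega] at h''
        exact h'' h'
      · exact hfne (i + 1) 1 (by omega) (by omega) h'.symm
      · exact hTnotC i (i + 2) h'.symm
    have hor : G.Adj (f i) (t (i + 1)) ∨ G.Adj (f (i + 2)) (t (i + 1)) := by
      by_contra hcon
      push_neg at hcon
      exact hclaw ⟨f (i + 1), f i, f (i + 2), t (i + 1),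
        (hfadj i).symm, hfadj (i + 1), hTG (htadj (i + 1)),
        hfne i 2 (by omega) (by omega), Ne.symm (hTnotC (i + 1) i),
        Ne.symm (hTnotC (i + 1) (i + 2)), hnab, hcon.1, hcon.2⟩
    rcases hor with h | h
    · left
      have hmem : t (i + 1) ∈ G.neighborSet (f i) := h
      rw [hNG i] at hmem
      rcases hmem with h' | h' | h'
      · exact absurd h' (hTnotC (i + 1) (i + (ℓ - 1)))
      · exact absurd h' (hTnotC (i + 1) (i + 1))
      · exact h'
    · right
      have hmem : t (i + 1) ∈ G.neighborSet (f (i + 2)) := h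
      rw [hNG (i + 2)] at hmem
      rcases hmem with h' | h' | h'
      · exact absurd h' (hTnotC (i + 1) (i + 2 + (ℓ - 1)))
      · exact absurd h' (hTnotC (i + 1) (i + 2 + 1))
      · exact h'
  -- alternation and parity
  have halt : ∀ i, (t i = t (i + 1)) ↔ ¬ (t (i + 1) = t (i + 2)) := by
    intro i
    constructor
    · intro h1 h2
      exact hfiber i ⟨h1, h2⟩
    · intro h2
      rcases hstep i with h | h
      · exact h.symm
      · exact absurd h h2
  have hind : ∀ n, ((t n = t (n + 1)) ↔ (Even n ↔ (t 0 = t 1))) := by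
    intro n
    induction n with
    | zero => simp
    | succ n ih =>
      have h1 := halt n
      rw [ih] at h1
      rw [Nat.even_add_one]
      tauto
  have hfin := hind ℓ
  have e1 : t ℓ = t 0 := by
    have h' := htper 0; rwa [Nat.zero_add] at h'
  have e2 : t (ℓ + 1) = t 1 := by
    have h' := htper 1; rwa [Nat.add_comm 1 ℓ] at h'
  rw [e1, e2] at hfin
  show Even ℓ
  by_cases h : t 0 = t 1 <;> tauto

/-- Lemma 2(iii): in a connected claw-free cubic graph with a good decomposition `{T, M, O}`,
every non-triangle cycle avoiding the spanning tree `T` is an even cycle. -/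
theorem cycle_avoiding_tree_even [Fintype V] (G T M O : SimpleGraph V)
    (hconn : G.Connected) (hclaw : IsClawFree G) (hcubic : IsCubic G)
    (hgood : IsGoodDecomposition G T M O)
    {v : V} (c : G.Walk v v) (hc : c.IsCycle)
    (hT : ∀ e ∈ c.edges, e ∉ T.edgeSet)
    (htri : c.length ≠ 3) :
    Even c.length := by
  obtain ⟨hTG, hMG, hOG, hTree, hMatch, hOreg, hpart, hdTM, hdTO, hdMO⟩ := hgood
  exact cycle_avoiding_tree_even' G T M O hclaw hcubic hTG hMG hOG hTree hMatch hOreg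
    hpart hdTM hdTO hdMO c hc hT htri
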